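/- Let V be an orthogonal complex vector space and B ∈ 𝔭(V) nilpotent and symmetric with respect to the orthogonal form. Then there exist vectors u₁,...,u_t ∈ V and integers e₁,...,e_t ≥ 0 such that the vectors B^b u_l (0 ≤ b ≤ e_l) form a basis of V, and all pairings among them vanish except (B^b u_l, B^{e_l - b} u_l) = 1. -/

import Mathlib

open Module

namespace NilpOrthAux

universe u

variable {V : Type u} [AddCommGroup V] [Module ℂ V]

lemma pow_adj (Ω : LinearMap.BilinForm ℂ V) (B : Module.End ℂ V)
    (hB : ∀ v w, Ω (B v) w = Ω v (B w)) :
    ∀ (n : ℕ) (v w : V), Ω ((B ^ n) v) w = Ω v ((B ^ n) w) := by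
  intro n
  induction n with
  | zero => simp
  | succ n ih =>
    intro v w
    calc Ω ((B ^ (n + 1)) v) w = Ω ((B ^ n) (B v)) w := by
          rw [pow_succ, Module.End.mul_apply]
      _ = Ω (B v) ((B ^ n) w) := ih _ _
      _ = Ω v (B ((B ^ n) w)) := hB _ _
      _ = Ω v ((B ^ (n + 1)) w) := by rw [pow_succ', Module.End.mul_apply]

lemma hcomp (B : Module.End ℂ V) (p q : ℕ) (x : V) :
    (B ^ p) ((B ^ q) x) = (B ^ (p + q)) x := by
  rw [← Module.End.mul_apply, ← pow_add]

lemma key : ∀ (n : ℕ) (V : Type u) [AddCommGroup V] [Module ℂ V] [FiniteDimensional ℂ V]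
    (_ : finrank ℂ V = n)
    (Ω : LinearMap.BilinForm ℂ V) (_ : Ω.Nondegenerate) (_ : ∀ v w, Ω v w = Ω w v)
    (B : Module.End ℂ V) (_ : ∀ v w, Ω (B v) w = Ω v (B w)) (_ : IsNilpotent B),
    ∃ (t : ℕ) (u : Fin t → V) (e : Fin t → ℕ),
      (∑ l, (e l + 1) = n) ∧
      (∀ (l m : Fin t) (a c : ℕ), a ≤ e l → c ≤ e m →
        Ω ((B ^ a) (u l)) ((B ^ c) (u m)) = if l = m ∧ a + c = e l then 1 else 0) := by
  intro n
  induction n using Nat.strong_induction_on with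
  | _ n IH =>
  intro V _ _ _ hdim Ω hΩ hsymm B hB hnil
  classical
  rcases Nat.eq_zero_or_pos n with hn | hn
  · exact ⟨0, Fin.elim0, Fin.elim0, by simp [hn], fun l => l.elim0⟩
  have : Nontrivial V := by
    apply Module.nontrivial_of_finrank_pos (R := ℂ)
    omega
  -- nilpotency index
  obtain ⟨v0, hv0⟩ := exists_ne (0 : V)
  have hex : ∃ k, B ^ k = 0 := hnil
  have hk0 : B ^ Nat.find hex = 0 := Nat.find_spec hex
  have hkpos : 0 < Nat.find hex := by
    rcases Nat.eq_zero_or_pos (Nat.find hex) with h | h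
    · exfalso
      rw [h, pow_zero] at hk0
      exact hv0 (by simpa using LinearMap.ext_iff.mp hk0 v0)
    · exact h
  obtain ⟨E, hE⟩ : ∃ E, Nat.find hex = E + 1 := ⟨Nat.find hex - 1, by omega⟩
  rw [hE] at hk0
  have hBEne : B ^ E ≠ 0 := Nat.find_min hex (by omega)
  have hpow0 : ∀ j, E < j → (B ^ j : Module.End ℂ V) = 0 := by
    intro j hj
    have h : j = (E + 1) + (j - (E + 1)) := by omega
    rw [h, pow_add, hk0, zero_mul]
  have hfhi : ∀ (u : V) (j : ℕ), E < j → Ω u ((B ^ j) u) = 0 := by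
    intro u j hj
    rw [hpow0 j hj]
    simp
  -- step 1 : some u with Ω u (B^E u) ≠ 0
  have hustart : ∃ u : V, Ω u ((B ^ E) u) ≠ 0 := by
    by_contra hall
    push_neg at hall
    have hpol : ∀ v w : V, Ω v ((B ^ E) w) = 0 := by
      intro v w
      have hsw : Ω w ((B ^ E) v) = Ω v ((B ^ E) w) := by
        rw [← pow_adj Ω B hB, hsymm]
      have h1 : Ω v ((B ^ E) v) + Ω w ((B ^ E) v) + (Ω v ((B ^ E) w) + Ω w ((B ^ E) w)) = 0 := by
        simpa [map_add, LinearMap.add_apply] using hall (v + w)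
      linear_combination (h1 - hall v - hall w - hsw) / 2
    obtain ⟨w0, hw0⟩ : ∃ w, (B ^ E) w ≠ 0 := by
      by_contra h
      push_neg at h
      exact hBEne (LinearMap.ext fun w => h w)
    obtain ⟨vv, hvv⟩ : ∃ v, Ω ((B ^ E) w0) v ≠ 0 := by
      by_contra h
      push_neg at h
      exact hw0 (hΩ.1 _ h)
    exact hvv (by rw [hsymm]; exact hpol _ _)
  -- step 2 : normalize
  obtain ⟨u0, hu0⟩ := hustart
  obtain ⟨cc, hcc⟩ := IsAlgClosed.exists_pow_nat_eq (k := ℂ) (Ω u0 ((B ^ E) u0))⁻¹ two_pos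
  have hu1 : Ω (cc • u0) ((B ^ E) (cc • u0)) = 1 := by
    have h : Ω (cc • u0) ((B ^ E) (cc • u0)) = cc ^ 2 * Ω u0 ((B ^ E) u0) := by
      simp only [map_smul, LinearMap.smul_apply, smul_eq_mul]
      ring
    rw [h, hcc, inv_mul_cancel₀ hu0]
  -- step 3 : kill lower coefficients
  have adjust : ∀ d : ℕ, d ≤ E → ∃ u : V, Ω u ((B ^ E) u) = 1 ∧
      ∀ j, E - d ≤ j → j < E → Ω u ((B ^ j) u) = 0 := by
    intro d
    induction d with
    | zero =>
      intro _
      exact ⟨cc • u0, hu1, fun j h1 h2 => absurd (lt_of_le_of_lt (by omega : E ≤ j) h2)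
        (lt_irrefl _)⟩
    | succ d ih =>
      intro hdE
      obtain ⟨u, hu, hzero⟩ := ih (by omega)
      set c : ℂ := -(Ω u ((B ^ (E - (d + 1))) u)) / 2 with hcdef
      have hexp : ∀ j : ℕ, Ω (u + c • (B ^ (d + 1)) u) ((B ^ j) (u + c • (B ^ (d + 1)) u)) =
            Ω u ((B ^ j) u) + 2 * c * Ω u ((B ^ (j + (d + 1))) u)
              + c ^ 2 * Ω u ((B ^ (j + (d + 1) + (d + 1))) u) := by
          intro j
          have t1 : Ω u ((B ^ j) ((B ^ (d + 1)) u)) = Ω u ((B ^ (j + (d + 1))) u) := by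
            rw [hcomp]
          have t2 : Ω ((B ^ (d + 1)) u) ((B ^ j) u) = Ω u ((B ^ (j + (d + 1))) u) := by
            rw [pow_adj Ω B hB, hcomp, Nat.add_comm]
          have t3 : Ω ((B ^ (d + 1)) u) ((B ^ j) ((B ^ (d + 1)) u))
              = Ω u ((B ^ (j + (d + 1) + (d + 1))) u) := by
            rw [pow_adj Ω B hB, hcomp, hcomp,
              show d + 1 + j + (d + 1) = j + (d + 1) + (d + 1) by omega]
          simp only [map_add, map_smul, LinearMap.add_apply, LinearMap.smul_apply, smul_eq_mul,
            t1, t2, t3]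
          ring
      refine ⟨u + c • (B ^ (d + 1)) u, ?_, ?_⟩
      · rw [hexp E, hu, hfhi u (E + (d + 1)) (by omega), hfhi u (E + (d + 1) + (d + 1)) (by omega)]
        ring
      · intro j hj1 hj2
        rw [hexp j]
        rcases eq_or_lt_of_le hj1 with heq | hlt
        · have h1 : j + (d + 1) = E := by omega
          rw [h1, hu, hfhi u (E + (d + 1)) (by omega), hcdef, ← heq]
          ring
        · rw [hzero j (by omega) hj2, hfhi u (j + (d + 1)) (by omega),
            hfhi u (j + (d + 1) + (d + 1)) (by omega)]
          ring
  obtain ⟨u2, hu2, hlow⟩ := adjust E le_rfl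
  have hpair1 : ∀ a c : ℕ, Ω ((B ^ a) u2) ((B ^ c) u2) = if a + c = E then 1 else 0 := by
    intro a c
    rw [pow_adj Ω B hB, hcomp]
    rcases lt_trichotomy (a + c) E with h | h | h
    · rw [if_neg (by omega)]
      exact hlow _ (by omega) h
    · rw [if_pos h, h, hu2]
    · rw [if_neg (by omega)]
      exact hfhi _ _ h
  set W : Submodule ℂ V := Submodule.span ℂ (Set.range fun a : Fin (E + 1) => (B ^ (a : ℕ)) u2)
    with hWdef
  have hmemW : ∀ a : ℕ, (B ^ a) u2 ∈ W := by
    intro a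
    by_cases h : a ≤ E
    · exact Submodule.subset_span ⟨⟨a, by omega⟩, rfl⟩
    · rw [hpow0 a (by omega)]; simp
  have hextract : ∀ (g : Fin (E + 1) → ℂ) (x : V), (∑ i, g i • (B ^ (i : ℕ)) u2) = x →
      ∀ a : Fin (E + 1), Ω x ((B ^ (E - (a : ℕ))) u2) = g a := by
    intro g x hx a
    have ha := a.isLt
    rw [← hx, LinearMap.BilinForm.sum_left]
    rw [Finset.sum_eq_single a]
    · rw [LinearMap.BilinForm.smul_left, hpair1, if_pos (by omega), mul_one]
    · intro b _ hb
      have hbb := b.isLt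
      rw [LinearMap.BilinForm.smul_left, hpair1, if_neg, mul_zero]
      intro hcond
      exact hb (Fin.ext (by omega))
    · intro h
      exact absurd (Finset.mem_univ a) h
  have li1 : LinearIndependent ℂ (fun a : Fin (E + 1) => (B ^ (a : ℕ)) u2) := by
    rw [Fintype.linearIndependent_iff]
    intro g hg a
    have h := hextract g 0 hg a
    simpa using h.symm
  have hrefl : Ω.IsRefl := fun x y h => by rw [hsymm]; exact h
  have hWnd : (Ω.restrict W).Nondegenerate := by
    refine (LinearMap.IsRefl.nondegenerate_iff_separatingLeft (B := Ω.restrict W) (fun x y h => hrefl _ _ h)).mpr ?_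
    rintro ⟨x, hx⟩ hall
    obtain ⟨g, hg⟩ := (Submodule.mem_span_range_iff_exists_fun ℂ).mp hx
    have hz : ∀ a : Fin (E + 1), g a = 0 := by
      intro a
      rw [← hextract g x hg a]
      simpa using hall ⟨(B ^ (E - (a : ℕ))) u2, hmemW _⟩
    have hx0 : x = 0 := by rw [← hg]; simp [hz]
    exact Subtype.ext hx0
  have hic : IsCompl W (Ω.orthogonal W) :=
    Ω.isCompl_orthogonal_of_restrict_nondegenerate hrefl hWnd
  set W' := Ω.orthogonal W with hW'def
  have hdimW : finrank ℂ W = E + 1 := by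
    rw [hWdef, finrank_span_eq_card li1, Fintype.card_fin]
  have hdimsum : finrank ℂ W + finrank ℂ W' = n := by
    rw [← hdim]
    exact Submodule.finrank_add_eq_of_isCompl hic
  have hBW : ∀ x ∈ W, B x ∈ W := by
    intro x hx
    induction hx using Submodule.span_induction with
    | mem x h =>
      obtain ⟨a, rfl⟩ := h
      have h1 : B ((B ^ (a : ℕ)) u2) = (B ^ (1 + (a : ℕ))) u2 := by
        rw [← hcomp B 1 (a : ℕ) u2, pow_one]
      rw [h1]
      exact hmemW _
    | zero => simp
    | add x y _ _ hx hy => rw [map_add]; exact W.add_mem hx hy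
    | smul c x _ hx => rw [map_smul]; exact W.smul_mem c hx
  have hBW' : ∀ x ∈ W', B x ∈ W' := by
    intro x hx y hy
    show Ω y (B x) = 0
    rw [← hB]
    exact hx (B y) (hBW y hy)
  set B' : Module.End ℂ W' := B.restrict hBW' with hB'def
  have hco : ∀ (p : ℕ) (x : W'), (((B' ^ p) x : W') : V) = (B ^ p) (x : V) := by
    intro p x
    rw [hB'def, Module.End.pow_restrict]
    rfl
  have hnil' : IsNilpotent B' := by
    refine ⟨E + 1, ?_⟩
    ext x
    show (((B' ^ (E + 1)) x : W') : V) = (((0 : Module.End ℂ W') x : W') : V)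
    rw [hco, hk0]
    simp
  set Ω' := Ω.restrict W' with hΩ'def
  have hres : ∀ x y : W', Ω' x y = Ω (x : V) (y : V) := fun x y => rfl
  have hsymm' : ∀ v w : W', Ω' v w = Ω' w v := fun v w => hsymm _ _
  have hB'adj : ∀ v w : W', Ω' (B' v) w = Ω' v (B' w) := by
    intro v w
    rw [hres, hres, hB'def, LinearMap.restrict_coe_apply, LinearMap.restrict_coe_apply]
    exact hB _ _
  have hΩ'nd : Ω'.Nondegenerate := by
    refine (LinearMap.IsRefl.nondegenerate_iff_separatingLeft (B := Ω') (fun x y h => hrefl _ _ h)).mpr ?_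
    rintro ⟨x, hx⟩ hall
    refine Subtype.ext (hΩ.1 x ?_)
    intro y
    have hy : y ∈ W ⊔ W' := by rw [hic.sup_eq_top]; trivial
    obtain ⟨w, hw, w', hw', rfl⟩ := Submodule.mem_sup.mp hy
    rw [map_add]
    have h1 : Ω x w = 0 := by rw [hsymm]; exact hx w hw
    have h2 : Ω x w' = 0 := hall ⟨w', hw'⟩
    rw [h1, h2, add_zero]
  have hlt : finrank ℂ W' < n := by omega
  obtain ⟨t', u', e', hsum', hpair'⟩ :=
    IH (finrank ℂ W') hlt W' rfl Ω' hΩ'nd hsymm' B' hB'adj hnil'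
  refine ⟨t' + 1, Fin.cases u2 (fun l => ((u' l : V))), Fin.cases E e', ?_, ?_⟩
  · rw [Fin.sum_univ_succ]
    simp only [Fin.cases_zero, Fin.cases_succ]
    rw [hsum']
    omega
  · intro l m
    induction l using Fin.cases with
    | zero =>
      induction m using Fin.cases with
      | zero =>
        intro a c ha hc
        simp only [Fin.cases_zero] at *
        rw [hpair1 a c]
        simp
      | succ m =>
        intro a c ha hc
        simp only [Fin.cases_zero, Fin.cases_succ] at *
        split_ifs with hh
        · exact absurd hh.1 (Fin.succ_ne_zero m).symm
        have hmem : (B ^ c) ((u' m : V)) ∈ W' :=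
          Module.End.pow_apply_mem_of_forall_mem c hBW' _ (u' m).2
        exact hmem _ (hmemW a)
    | succ l =>
      induction m using Fin.cases with
      | zero =>
        intro a c ha hc
        simp only [Fin.cases_zero, Fin.cases_succ] at *
        rw [hsymm]
        split_ifs with hh
        · exact absurd hh.1 (Fin.succ_ne_zero l)
        have hmem : (B ^ a) ((u' l : V)) ∈ W' :=
          Module.End.pow_apply_mem_of_forall_mem a hBW' _ (u' l).2
        exact hmem _ (hmemW c)
      | succ m =>
        intro a c ha hc
        simp only [Fin.cases_succ] at *
        rw [← hco, ← hco]
        have h := hpair' l m a c ha hc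
        rw [hres] at h
        rw [h]
        simp [Fin.succ_inj]

end NilpOrthAux

/-- Let `V` be a complex orthogonal vector space and `B ∈ 𝔭(V)` nilpotent and
symmetric with respect to the orthogonal form. Then there exist vectors `u₁,…,u_t` and
integers `e₁,…,e_t ≥ 0` such that the vectors `B^b u_l` (`0 ≤ b ≤ e_l`) form a basis of `V`
and all pairings among them vanish except `(B^b u_l, B^{e_l−b} u_l) = 1`. -/
theorem nilpotent_symmetric_orthogonal_normal_form
    (V : Type*) [AddCommGroup V] [Module ℂ V] [FiniteDimensional ℂ V]
    (Ω : LinearMap.BilinForm ℂ V) (hΩ : Ω.Nondegenerate)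
    (hsymm : ∀ v w, Ω v w = Ω w v)
    (B : Module.End ℂ V) (hB : ∀ v w, Ω (B v) w = Ω v (B w))
    (hnil : IsNilpotent B) :
    ∃ (t : ℕ) (u : Fin t → V) (e : Fin t → ℕ),
      (∀ l, u l ≠ 0) ∧
      (∃ b : Basis (Σ l : Fin t, Fin (e l + 1)) ℂ V,
        ∀ (l : Fin t) (a : Fin (e l + 1)), b ⟨l, a⟩ = (B ^ (a : ℕ)) (u l)) ∧
      (∀ (l m : Fin t) (a c : ℕ), a ≤ e l → c ≤ e m →
        Ω ((B ^ a) (u l)) ((B ^ c) (u m)) = if l = m ∧ a + c = e l then 1 else 0) := by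
  classical
  obtain ⟨t, u, e, hsum, hpair⟩ :=
    NilpOrthAux.key (Module.finrank ℂ V) V rfl Ω hΩ hsymm B hB hnil
  have hune : ∀ l, u l ≠ 0 := by
    intro l hl
    have h := hpair l l 0 (e l) (Nat.zero_le _) le_rfl
    rw [if_pos ⟨rfl, by omega⟩] at h
    rw [hl] at h
    simp at h
  have li : LinearIndependent ℂ
      (fun i : (Σ l : Fin t, Fin (e l + 1)) => (B ^ ((i.2 : ℕ))) (u i.1)) := by
    rw [Fintype.linearIndependent_iff]
    intro g hg i
    obtain ⟨l, a⟩ := i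
    have ha := a.isLt
    have hkey := congrArg (fun x => Ω x ((B ^ (e l - (a : ℕ))) (u l))) hg
    simp only [LinearMap.BilinForm.sum_left, LinearMap.BilinForm.smul_left, map_zero,
      LinearMap.zero_apply] at hkey
    rw [Finset.sum_eq_single (⟨l, a⟩ : Σ l : Fin t, Fin (e l + 1))] at hkey
    · rw [hpair l l (a : ℕ) (e l - (a : ℕ)) (by omega) (by omega),
        if_pos ⟨rfl, by omega⟩, mul_one] at hkey
      exact hkey
    · rintro ⟨m, c⟩ _ hne
      have hcc := c.isLt
      rw [hpair m l (c : ℕ) (e l - (a : ℕ)) (by omega) (by omega)]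
      by_cases hm : m = l
      · subst hm
        rw [if_neg, mul_zero]
        rintro ⟨-, h2⟩
        exact hne (congrArg (Sigma.mk m) (Fin.ext (by omega)))
      · rw [if_neg (fun hcon => hm hcon.1), mul_zero]
    · intro h
      exact absurd (Finset.mem_univ _) h
  have hcard : Fintype.card (Σ l : Fin t, Fin (e l + 1)) = Module.finrank ℂ V := by
    rw [Fintype.card_sigma]
    simpa using hsum
  cases isEmpty_or_nonempty (Σ l : Fin t, Fin (e l + 1)) with
  | inl h =>
    have h0 : Module.finrank ℂ V = 0 := by rw [← hcard]; simp
    have : Subsingleton V := by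
      rw [← Module.finrank_zero_iff (R := ℂ)] at *
      omega
    refine ⟨t, u, e, hune, ⟨Basis.empty _, ?_⟩, hpair⟩
    intro l a
    exact (h.false ⟨l, a⟩).elim
  | inr h =>
    refine ⟨t, u, e, hune, ⟨basisOfLinearIndependentOfCardEqFinrank li hcard, ?_⟩, hpair⟩
    intro l a
    rw [coe_basisOfLinearIndependentOfCardEqFinrank]
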